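/- KKT error bounded by normalized duality gap for LP: consider L(x,y) = cᵀx + bᵀy − yᵀAx on Z = {x ≥ 0} × ℝᵐ with the Euclidean norm, K the stacked KKT matrix with rows [I, 0], [−A, 0], [A, 0], [0, −Aᵀ], [−cᵀ, bᵀ] and h = (0, −b, b, −c, 0). Suppose a saddle point exists. Then for all R > 0, r ∈ (0, R], and z = (x,y) ∈ Z with ‖z‖ ≤ R: ‖(h − Kz)⁺‖₂ ≤ ρ_r(z)·√(1 + R²). -/

import Mathlib

set_option maxHeartbeats 1000000


open scoped RealInnerProductSpace Matrix

/-- The primal-dual space `ℝⁿ × ℝᵐ` equipped with the Euclidean (ℓ²-product) norm. -/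
abbrev PDSpace (n m : ℕ) :=
  WithLp 2 (EuclideanSpace ℝ (Fin n) × EuclideanSpace ℝ (Fin m))

/-- Primal component of a primal-dual point. -/
def xPart {n m : ℕ} (z : PDSpace n m) : EuclideanSpace ℝ (Fin n) :=
  ((WithLp.equiv 2 _) z).1

/-- Dual component of a primal-dual point. -/
def yPart {n m : ℕ} (z : PDSpace n m) : EuclideanSpace ℝ (Fin m) :=
  ((WithLp.equiv 2 _) z).2

/-- Componentwise positive part of a Euclidean vector. -/
noncomputable def posPart {k : ℕ} (v : EuclideanSpace ℝ (Fin k)) :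
    EuclideanSpace ℝ (Fin k) :=
  (EuclideanSpace.equiv (Fin k) ℝ).symm fun i => max (v i) 0

lemma inner_posPart_self {k : ℕ} (u : EuclideanSpace ℝ (Fin k)) :
    ⟪u, posPart u⟫ = ‖posPart u‖ ^ 2 := by
  rw [← real_inner_self_eq_norm_sq]
  simp only [PiLp.inner_apply, RCLike.inner_apply, conj_trivial]
  refine Finset.sum_congr rfl fun i _ => ?_
  show max (u i) 0 * u i = max (u i) 0 * max (u i) 0
  rcases le_total (u i) 0 with h | h
  · simp [max_eq_right h]
  · simp [max_eq_left h]

lemma inner_toEuclideanLin {n m : ℕ} (A : Matrix (Fin m) (Fin n) ℝ)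
    (x : EuclideanSpace ℝ (Fin n)) (y : EuclideanSpace ℝ (Fin m)) :
    ⟪y, Matrix.toEuclideanLin A x⟫ = ⟪Matrix.toEuclideanLin Aᵀ y, x⟫ := by
  rw [← Matrix.conjTranspose_eq_transpose_of_trivial,
    Matrix.toEuclideanLin_conjTranspose_eq_adjoint, LinearMap.adjoint_inner_left]

/-- KKT error bounded by normalized duality gap for LP: for
`L(x,y) = cᵀx + bᵀy − yᵀAx` on `Z = {x ≥ 0} × ℝᵐ` (Euclidean norm), if a saddle point
exists, then for all `R > 0`, `r ∈ (0, R]` and `z ∈ Z` with `‖z‖ ≤ R`,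
`‖(h − Kz)⁺‖₂ ≤ ρ_r(z)·√(1 + R²)`, where for `z ∈ Z` (so `x ≥ 0`) the KKT residual is
`‖(h − Kz)⁺‖₂² = ((cᵀx − bᵀy)⁺)² + ‖(Aᵀy − c)⁺‖₂² + ‖Ax − b‖₂²`. -/
theorem lp_kkt_error_le_normalized_duality_gap {n m : ℕ}
    (A : Matrix (Fin m) (Fin n) ℝ)
    (b : EuclideanSpace ℝ (Fin m)) (c : EuclideanSpace ℝ (Fin n))
    (L : EuclideanSpace ℝ (Fin n) → EuclideanSpace ℝ (Fin m) → ℝ)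
    (hL : ∀ x y, L x y = ⟪c, x⟫ + ⟪b, y⟫ - ⟪y, Matrix.toEuclideanLin A x⟫)
    (Z : Set (PDSpace n m)) (hZ : Z = {z | ∀ i, 0 ≤ xPart z i})
    (hsaddle : ∃ zs ∈ Z, ∀ z ∈ Z,
      L (xPart zs) (yPart z) ≤ L (xPart zs) (yPart zs) ∧
        L (xPart zs) (yPart zs) ≤ L (xPart z) (yPart zs))
    (R r : ℝ) (hR : 0 < R) (hr : r ∈ Set.Ioc 0 R)
    (z : PDSpace n m) (hzZ : z ∈ Z) (hzR : ‖z‖ ≤ R) :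
    Real.sqrt ((max (⟪c, xPart z⟫ - ⟪b, yPart z⟫) 0) ^ 2 +
        ‖posPart (Matrix.toEuclideanLin Aᵀ (yPart z) - c)‖ ^ 2 +
        ‖Matrix.toEuclideanLin A (xPart z) - b‖ ^ 2) ≤
      ((1 / r) * sSup ((fun w : PDSpace n m =>
            L (xPart z) (yPart w) - L (xPart w) (yPart z)) ''
          {w | w ∈ Z ∧ ‖w - z‖ ≤ r})) * Real.sqrt (1 + R ^ 2) := by
  obtain ⟨hr0, hrR⟩ := hr
  set x := xPart z with hx_def
  set y := yPart z with hy_def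
  set f : PDSpace n m → ℝ := fun w => L x (yPart w) - L (xPart w) y with hf_def
  set S : Set ℝ := f '' {w | w ∈ Z ∧ ‖w - z‖ ≤ r} with hS_def
  set v₁ : EuclideanSpace ℝ (Fin n) := posPart (Matrix.toEuclideanLin Aᵀ y - c) with hv₁_def
  set v₂ : EuclideanSpace ℝ (Fin m) := b - Matrix.toEuclideanLin A x with hv₂_def
  set v : PDSpace n m := (WithLp.equiv 2 _).symm (v₁, v₂) with hv_def
  -- basic continuity / boundedness
  have hBdd : BddAbove S := by
    have hxc : Continuous (xPart (n := n) (m := m)) :=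
      continuous_fst.comp (WithLp.prodContinuousLinearEquiv 2 ℝ _ _).continuous
    have hyc : Continuous (yPart (n := n) (m := m)) :=
      continuous_snd.comp (WithLp.prodContinuousLinearEquiv 2 ℝ _ _).continuous
    have hA : Continuous (Matrix.toEuclideanLin A) :=
      (Matrix.toEuclideanLin A).continuous_of_finiteDimensional
    have hf : Continuous f := by
      simp only [hf_def, hL]
      exact (((continuous_const.add (continuous_const.inner hyc)).sub
        (hyc.inner continuous_const)).sub
        (((continuous_const.inner hxc).add continuous_const).sub
          (continuous_const.inner (hA.comp hxc))))
    have hsub : {w : PDSpace n m | w ∈ Z ∧ ‖w - z‖ ≤ r} ⊆ Metric.closedBall z r := by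
      intro w hw
      simpa [Metric.mem_closedBall, dist_eq_norm] using hw.2
    exact (((isCompact_closedBall z r).image hf).bddAbove).mono (Set.image_mono hsub)
  -- 0 ≤ sSup S
  have h0 : 0 ≤ sSup S := by
    refine le_csSup hBdd ⟨z, ⟨hzZ, by simp [le_of_lt hr0]⟩, by simp [hf_def]; exact sub_self _⟩
  -- inner product expansion of f at z + t • v
  have hxnn : ∀ i, 0 ≤ x i := by rw [hZ] at hzZ; exact hzZ
  -- step: r * ‖v‖ ≤ sSup S
  have hv : r * ‖v‖ ≤ sSup S := by
    rcases eq_or_lt_of_le (norm_nonneg v) with h0v | h0v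
    · rw [← h0v, mul_zero]; exact h0
    · set t : ℝ := r / ‖v‖ with ht_def
      have ht : 0 < t := div_pos hr0 h0v
      set w : PDSpace n m := z + t • v with hw_def
      have hwx : xPart w = x + t • v₁ := rfl
      have hwy : yPart w = y + t • v₂ := rfl
      have hwZ : w ∈ Z := by
        rw [hZ]
        intro i
        rw [hwx]
        have h1 : (x + t • v₁) i = x i + t * v₁ i := rfl
        have h2 : 0 ≤ v₁ i := by
          simp only [hv₁_def]
          exact le_max_right _ _
        rw [h1]
        exact add_nonneg (hxnn i) (mul_nonneg ht.le h2)
      have hwr : ‖w - z‖ ≤ r := by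
        rw [hw_def, add_sub_cancel_left, norm_smul, Real.norm_eq_abs,
          abs_of_pos ht, ht_def, div_mul_cancel₀ _ (ne_of_gt h0v)]
      have hfw : f w = r * ‖v‖ := by
        have hnv : ‖v‖ ^ 2 = ‖v₁‖ ^ 2 + ‖v₂‖ ^ 2 := by
          rw [hv_def, WithLp.prod_norm_sq_eq_of_L2]; rfl
        have hAv : Matrix.toEuclideanLin A (x + t • v₁) =
            Matrix.toEuclideanLin A x + t • Matrix.toEuclideanLin A v₁ := by
          rw [map_add, map_smul]
        simp only [hf_def, hL, hwx, hwy, hAv, inner_add_right, inner_add_left,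
          real_inner_smul_right, real_inner_smul_left]
        have e1 : ⟪y, Matrix.toEuclideanLin A v₁⟫ - ⟪c, v₁⟫ = ‖v₁‖ ^ 2 := by
          rw [inner_toEuclideanLin, ← inner_sub_left, hv₁_def, inner_posPart_self]
        have e2 : ⟪b, v₂⟫ - ⟪v₂, Matrix.toEuclideanLin A x⟫ = ‖v₂‖ ^ 2 := by
          rw [real_inner_comm v₂, ← inner_sub_right, ← hv₂_def,
            real_inner_self_eq_norm_sq]
        have : t * (‖v₁‖ ^ 2 + ‖v₂‖ ^ 2) = r * ‖v‖ := by
          rw [← hnv, ht_def, sq]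
          field_simp
        linear_combination t * e1 + t * e2 + this
      rw [← hfw]
      exact le_csSup hBdd ⟨w, ⟨hwZ, hwr⟩, rfl⟩
  -- step: (r/R) * (⟪c,x⟫ - ⟪b,y⟫) ≤ sSup S
  have hg : r / R * (⟪c, x⟫ - ⟪b, y⟫) ≤ sSup S := by
    set t : ℝ := r / R with ht_def
    have ht0 : 0 < t := div_pos hr0 hR
    have ht1 : t ≤ 1 := (div_le_one hR).2 hrR
    set w : PDSpace n m := z - t • z with hw_def
    have hwx : xPart w = x - t • x := rfl
    have hwy : yPart w = y - t • y := rfl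
    have hwZ : w ∈ Z := by
      rw [hZ]
      intro i
      rw [hwx]
      have h1 : (x - t • x) i = x i - t * x i := rfl
      rw [h1]
      nlinarith [hxnn i]
    have hwr : ‖w - z‖ ≤ r := by
      rw [hw_def, sub_sub_cancel_left, norm_neg, norm_smul, Real.norm_eq_abs,
        abs_of_pos ht0, ht_def]
      calc r / R * ‖z‖ ≤ r / R * R := by
            exact mul_le_mul_of_nonneg_left hzR (le_of_lt ht0)
        _ = r := div_mul_cancel₀ _ (ne_of_gt hR)
    have hfw : f w = t * (⟪c, x⟫ - ⟪b, y⟫) := by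
      simp only [hf_def, hL, hwx, hwy, map_sub, map_smul, inner_sub_right,
        inner_sub_left, real_inner_smul_right, real_inner_smul_left]
      ring
    calc t * (⟪c, x⟫ - ⟪b, y⟫) = f w := hfw.symm
      _ ≤ sSup S := le_csSup hBdd ⟨w, ⟨hwZ, hwr⟩, rfl⟩
  -- put it together
  set ρ : ℝ := (1 / r) * sSup S with hρ_def
  have hρ0 : 0 ≤ ρ := mul_nonneg (by positivity) h0
  have hvρ : ‖v‖ ≤ ρ := by
    rw [hρ_def]
    calc ‖v‖ = 1 / r * (r * ‖v‖) := by field_simp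
      _ ≤ 1 / r * sSup S := mul_le_mul_of_nonneg_left hv (by positivity)
  have hgρ : max (⟪c, x⟫ - ⟪b, y⟫) 0 ≤ R * ρ := by
    have h1 : ⟪c, x⟫ - ⟪b, y⟫ ≤ R * ρ := by
      rw [hρ_def]
      have := mul_le_mul_of_nonneg_left hg (le_of_lt (div_pos hR hr0 : (0:ℝ) < R / r))
      calc ⟪c, x⟫ - ⟪b, y⟫ = R / r * (r / R * (⟪c, x⟫ - ⟪b, y⟫)) := by
            field_simp
        _ ≤ R / r * sSup S := this
        _ = R * (1 / r * sSup S) := by ring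
    exact max_le h1 (by positivity)
  have hnv : ‖v₁‖ ^ 2 + ‖v₂‖ ^ 2 = ‖v‖ ^ 2 := by
    rw [hv_def, WithLp.prod_norm_sq_eq_of_L2]; rfl
  have hv₂' : ‖Matrix.toEuclideanLin A x - b‖ = ‖v₂‖ := by
    rw [hv₂_def, norm_sub_rev]
  rw [hv₂']
  have hsum : (max (⟪c, x⟫ - ⟪b, y⟫) 0) ^ 2 + ‖v₁‖ ^ 2 + ‖v₂‖ ^ 2 ≤
      ρ ^ 2 * (1 + R ^ 2) := by
    have h1 : (max (⟪c, x⟫ - ⟪b, y⟫) 0) ^ 2 ≤ (R * ρ) ^ 2 := by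
      have := le_max_right (⟪c, x⟫ - ⟪b, y⟫) 0
      nlinarith [hgρ]
    have h2 : ‖v₁‖ ^ 2 + ‖v₂‖ ^ 2 ≤ ρ ^ 2 := by
      rw [hnv]
      nlinarith [norm_nonneg v, hvρ]
    nlinarith
  calc Real.sqrt ((max (⟪c, x⟫ - ⟪b, y⟫) 0) ^ 2 + ‖v₁‖ ^ 2 + ‖v₂‖ ^ 2)
      ≤ Real.sqrt (ρ ^ 2 * (1 + R ^ 2)) := Real.sqrt_le_sqrt hsum
    _ = ρ * Real.sqrt (1 + R ^ 2) := by
        rw [Real.sqrt_mul (sq_nonneg ρ), Real.sqrt_sq hρ0]
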